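/- For q ≥ 1, the generating function for the total number of 0s over all q-decreasing words of length n is P_{q,0}(x) = x(1 − x^q) / (1 − 2x + x^{q+2})^2. -/

import Mathlib

/-- A binary word (`List Bool`, `true` = bit 1) is `q`-decreasing if it is a
concatenation `1^{b0} ++ 0^{a1}1^{b1} ++ ... ++ 0^{am}1^{bm}` where every
block `0^a 1^b` with `a > 0` satisfies `q*a > b` (equivalently, every maximal
factor of the form `0^a 1^b` with `a > 0` satisfies `q*a > b`). -/
inductive QDecreasing (q : ℕ) : List Bool → Prop where
  | ones (m : ℕ) : QDecreasing q (List.replicate m true)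
  | snoc (w : List Bool) (a b : ℕ) (ha : 0 < a) (hb : b < q * a)
      (hw : QDecreasing q w) :
      QDecreasing q (w ++ List.replicate a false ++ List.replicate b true)

/-- The popularity of the bit `b` among `q`-decreasing words of length `n`:
the number of pairs (word, position) where the word is a `q`-decreasing word of
length `n` carrying the bit `b` at the given position. -/
noncomputable def qdecPopularity (q : ℕ) (b : Bool) (n : ℕ) : ℕ :=
  Nat.card {p : List Bool × ℕ //
    p.1.length = n ∧ QDecreasing q p.1 ∧ p.1[p.2]? = some b}


section Aux

/-! ### Trailing run decomposition machinery -/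

/-- number of trailing `true`s -/
def tb (w : List Bool) : ℕ := (w.rtakeWhile id).length
/-- number of trailing `false`s after removing trailing trues -/
def ta (w : List Bool) : ℕ := (((w.rdropWhile id)).rtakeWhile (fun x => !x)).length
/-- the word with the trailing `0^a 1^b` block removed -/
def core (w : List Bool) : List Bool := (w.rdropWhile id).rdropWhile (fun x => !x)

/-- "does not end in false" -/
def NEF (w : List Bool) : Prop := w.getLast? ≠ some false

lemma takeWhile_true_rep (b : ℕ) (l : List Bool) :
    List.takeWhile id (List.replicate b true ++ l) = List.replicate b true ++ List.takeWhile id l := by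
  induction b with
  | zero => simp
  | succ n ih => simp [List.replicate_succ, List.takeWhile_cons, ih]

lemma dropWhile_true_rep (b : ℕ) (l : List Bool) :
    List.dropWhile id (List.replicate b true ++ l) = List.dropWhile id l := by
  induction b with
  | zero => simp
  | succ n ih => simp [List.replicate_succ, List.dropWhile_cons, ih]

lemma takeWhile_false_rep (a : ℕ) (l : List Bool) :
    List.takeWhile (fun x => !x) (List.replicate a false ++ l)
      = List.replicate a false ++ List.takeWhile (fun x => !x) l := by
  induction a with
  | zero => simp
  | succ n ih => simp [List.replicate_succ, List.takeWhile_cons, ih]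

lemma dropWhile_false_rep (a : ℕ) (l : List Bool) :
    List.dropWhile (fun x => !x) (List.replicate a false ++ l)
      = List.dropWhile (fun x => !x) l := by
  induction a with
  | zero => simp
  | succ n ih => simp [List.replicate_succ, List.dropWhile_cons, ih]

lemma takeWhile_id_head_false (l : List Bool) (h : l.head? ≠ some true) :
    List.takeWhile id l = [] := by
  cases l with
  | nil => simp
  | cons x t =>
    cases x
    · simp [List.takeWhile_cons]
    · simp at h

lemma dropWhile_id_head_false (l : List Bool) (h : l.head? ≠ some true) :
    List.dropWhile id l = l := by
  cases l with
  | nil => simp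
  | cons x t =>
    cases x
    · simp [List.dropWhile_cons]
    · simp at h

lemma takeWhile_not_head_true (l : List Bool) (h : l.head? ≠ some false) :
    List.takeWhile (fun x => !x) l = [] := by
  cases l with
  | nil => simp
  | cons x t =>
    cases x
    · simp at h
    · simp [List.takeWhile_cons]

lemma dropWhile_not_head_true (l : List Bool) (h : l.head? ≠ some false) :
    List.dropWhile (fun x => !x) l = l := by
  cases l with
  | nil => simp
  | cons x t =>
    cases x
    · simp at h
    · simp [List.dropWhile_cons]

lemma head?_reverse' (l : List Bool) : l.reverse.head? = l.getLast? := by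
  simp [List.head?_reverse]

/-- main computation: runs of `u ++ 0^a ++ 1^b` for `u` not ending in false, `a > 0`. -/
lemma runs_compute (u : List Bool) (hu : NEF u) (a b : ℕ) (ha : 0 < a) :
    tb (u ++ List.replicate a false ++ List.replicate b true) = b ∧
    ta (u ++ List.replicate a false ++ List.replicate b true) = a ∧
    core (u ++ List.replicate a false ++ List.replicate b true) = u := by
  have hrev : (u ++ List.replicate a false ++ List.replicate b true).reverse
      = List.replicate b true ++ (List.replicate a false ++ u.reverse) := by
    simp [List.reverse_append]
  have hhead : (List.replicate a false ++ u.reverse).head? = some false := by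
    cases a with
    | zero => omega
    | succ n => simp [List.replicate_succ]
  have htake : List.takeWhile id ((u ++ List.replicate a false ++ List.replicate b true).reverse)
      = List.replicate b true := by
    rw [hrev, takeWhile_true_rep, takeWhile_id_head_false _ (by rw [hhead]; simp)]
    simp
  have hdrop : List.dropWhile id ((u ++ List.replicate a false ++ List.replicate b true).reverse)
      = List.replicate a false ++ u.reverse := by
    rw [hrev, dropWhile_true_rep, dropWhile_id_head_false _ (by rw [hhead]; simp)]
  have hurev : u.reverse.head? ≠ some false := by rw [head?_reverse']; exact hu
  refine ⟨?_, ?_, ?_⟩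
  · rw [tb, List.rtakeWhile, htake]; simp
  · rw [ta, List.rdropWhile, List.rtakeWhile, List.reverse_reverse, hdrop,
      takeWhile_false_rep, takeWhile_not_head_true _ hurev]
    simp
  · rw [core, List.rdropWhile, List.rdropWhile, List.reverse_reverse, hdrop,
      dropWhile_false_rep, dropWhile_not_head_true _ hurev]
    simp

lemma decomp (w : List Bool) :
    w = core w ++ List.replicate (ta w) false ++ List.replicate (tb w) true := by
  have h1 : List.takeWhile id w.reverse = List.replicate (tb w) true := by
    have ht : tb w = (List.takeWhile id w.reverse).length := by
      rw [tb, List.rtakeWhile, List.length_reverse]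
    rw [ht]
    exact List.eq_replicate_of_mem fun b hb => by simpa using List.mem_takeWhile_imp hb
  have h2 : List.takeWhile (fun x => !x) (List.dropWhile id w.reverse)
      = List.replicate (ta w) false := by
    have ht : ta w = (List.takeWhile (fun x => !x) (List.dropWhile id w.reverse)).length := by
      rw [ta, List.rdropWhile, List.rtakeWhile, List.reverse_reverse, List.length_reverse]
    rw [ht]
    exact List.eq_replicate_of_mem fun b hb => by simpa using List.mem_takeWhile_imp hb
  have h3 : List.dropWhile (fun x => !x) (List.dropWhile id w.reverse) = (core w).reverse := by
    rw [core, List.rdropWhile, List.rdropWhile, List.reverse_reverse, List.reverse_reverse]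
  conv_lhs => rw [← List.reverse_reverse w,
    ← List.takeWhile_append_dropWhile (p := id) (l := w.reverse),
    ← List.takeWhile_append_dropWhile (p := fun x => !x) (l := List.dropWhile id w.reverse)]
  rw [h1, h2, h3]
  simp [List.reverse_append, List.append_assoc]

lemma NEF_core (w : List Bool) : NEF (core w) := by
  rw [core, NEF, List.rdropWhile, List.getLast?_reverse]
  cases hd : List.dropWhile (fun x => !x) ((List.rdropWhile id w).reverse) with
  | nil => simp
  | cons x t =>
    have hx := List.head_dropWhile_not (fun x => !x) (l := (List.rdropWhile id w).reverse)
      (by rw [hd]; simp)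
    simp only [hd, List.head_cons] at hx
    simp only [Bool.not_eq_false'] at hx
    simp [hx]

lemma tb_append_true (w : List Bool) : tb (w ++ [true]) = tb w + 1 := by
  rw [tb, tb, List.rtakeWhile_concat_pos _ _ _ (by simp)]
  simp

lemma rdrop_append_true (w : List Bool) : (w ++ [true]).rdropWhile id = w.rdropWhile id :=
  List.rdropWhile_concat_pos _ _ _ (by simp)

lemma ta_append_true (w : List Bool) : ta (w ++ [true]) = ta w := by
  rw [ta, ta, rdrop_append_true]

lemma core_append_true (w : List Bool) : core (w ++ [true]) = core w := by
  rw [core, core, rdrop_append_true]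

lemma tb_rep_true (m : ℕ) : tb (List.replicate m true) = m := by
  rw [tb, List.rtakeWhile_eq_self_iff.mpr (fun x hx => by simp_all [List.eq_of_mem_replicate hx])]
  simp

lemma rdrop_rep_true (m : ℕ) : (List.replicate m true).rdropWhile id = [] := by
  rw [List.rdropWhile_eq_nil_iff]
  intro x hx
  simp [List.eq_of_mem_replicate hx]

lemma ta_rep_true (m : ℕ) : ta (List.replicate m true) = 0 := by
  rw [ta, rdrop_rep_true]; simp

lemma core_rep_true (m : ℕ) : core (List.replicate m true) = [] := by
  rw [core, rdrop_rep_true]; simp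

lemma eq_rep_of_ta_zero (w : List Bool) (h : ta w = 0) :
    core w = [] ∧ w = List.replicate (tb w) true := by
  have hX : List.dropWhile id w.reverse = [] := by
    cases hX : List.dropWhile id w.reverse with
    | nil => rfl
    | cons x t =>
      exfalso
      have hx := List.head_dropWhile_not id (l := w.reverse) (by rw [hX]; simp)
      simp only [hX, List.head_cons] at hx
      simp only [id] at hx
      rw [ta, List.rdropWhile, List.rtakeWhile, List.reverse_reverse, hX] at h
      simp [List.takeWhile_cons, hx] at h
  have hc : core w = [] := by
    rw [core, List.rdropWhile, List.rdropWhile, List.reverse_reverse, hX]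
    simp
  refine ⟨hc, ?_⟩
  conv_lhs => rw [decomp w]
  rw [hc, h]
  simp

/-- trailing falses count -/
def tf (w : List Bool) : ℕ := (w.rtakeWhile (fun x => !x)).length
/-- word with trailing falses removed -/
def dtf (w : List Bool) : List Bool := w.rdropWhile (fun x => !x)

lemma dtf_decomp (w : List Bool) : w = dtf w ++ List.replicate (tf w) false := by
  have h2 : List.takeWhile (fun x => !x) w.reverse = List.replicate (tf w) false := by
    have ht : tf w = (List.takeWhile (fun x => !x) w.reverse).length := by
      rw [tf, List.rtakeWhile, List.length_reverse]
    rw [ht]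
    exact List.eq_replicate_of_mem fun b hb => by simpa using List.mem_takeWhile_imp hb
  have h3 : List.dropWhile (fun x => !x) w.reverse = (dtf w).reverse := by
    rw [dtf, List.rdropWhile, List.reverse_reverse]
  conv_lhs => rw [← List.reverse_reverse w,
    ← List.takeWhile_append_dropWhile (p := fun x => !x) (l := w.reverse)]
  rw [h2, h3]
  simp

lemma NEF_dtf (w : List Bool) : NEF (dtf w) := by
  rw [dtf, NEF, List.rdropWhile, List.getLast?_reverse]
  cases hd : List.dropWhile (fun x => !x) w.reverse with
  | nil => simp
  | cons x t =>
    have hx := List.head_dropWhile_not (fun x => !x) (l := w.reverse) (by rw [hd]; simp)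
    simp only [hd, List.head_cons] at hx
    simp only [Bool.not_eq_false'] at hx
    simp [hx]

lemma len_decomp (w : List Bool) : w.length = (core w).length + ta w + tb w := by
  conv_lhs => rw [decomp w]
  simp
  omega

lemma mark_left (u v : List Bool) (i : ℕ) (h : i < u.length) : (u ++ v)[i]? = u[i]? := by
  rw [List.getElem?_append]
  simp [h]

lemma mark_false_pos (u : List Bool) (a b i : ℕ) (h1 : u.length ≤ i) (h2 : i < u.length + a) :
    (u ++ List.replicate a false ++ List.replicate b true)[i]? = some false := by
  rw [List.append_assoc, List.getElem?_append, if_neg (by omega), List.getElem?_append,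
    if_pos (by simp only [List.length_replicate]; omega), List.getElem?_replicate,
    if_pos (by omega)]

lemma mark_bound (u : List Bool) (a b i : ℕ)
    (h : (u ++ List.replicate a false ++ List.replicate b true)[i]? = some false) :
    i < u.length + a := by
  by_contra hc
  push_neg at hc
  rw [List.append_assoc, List.getElem?_append, if_neg (by omega), List.getElem?_append,
    if_neg (by simp only [List.length_replicate]; omega), List.getElem?_replicate] at h
  split at h <;> simp_all

variable {q : ℕ}

lemma qd_nil : QDecreasing q [] := by simpa using QDecreasing.ones 0

lemma qd_append_rep_false (hq : 1 ≤ q) (w : List Bool) (k : ℕ) (h : QDecreasing q w) :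
    QDecreasing q (w ++ List.replicate k false) := by
  cases k with
  | zero => simpa using h
  | succ k =>
    have := QDecreasing.snoc w (k+1) 0 (by omega)
      (by have := Nat.mul_pos (show 0 < q by omega) (show 0 < k+1 by omega); omega) h
    simpa using this

lemma qd_drop_one_false (w : List Bool) (h : QDecreasing q (w ++ [false])) (hq : 1 ≤ q) :
    QDecreasing q w := by
  generalize hx : w ++ [false] = x at h
  induction h generalizing w with
  | ones m =>
    exfalso
    cases m with
    | zero => simpa using congrArg List.length hx.symm
    | succ m =>
      have := congrArg List.getLast? hx
      rw [List.replicate_succ'] at this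
      simp at this
  | snoc u a b ha hb hu ih =>
    cases b with
    | succ b =>
      exfalso
      have := congrArg List.getLast? hx
      rw [List.replicate_succ' (n := b)] at this
      simp [← List.append_assoc] at this
    | zero =>
      simp only [List.replicate_zero, List.append_nil] at hx
      cases a with
      | zero => omega
      | succ a =>
        rw [List.replicate_succ', ← List.append_assoc] at hx
        have hw : u ++ List.replicate a false = w := List.append_cancel_right hx.symm
        rw [← hw]
        exact qd_append_rep_false hq u a hu

lemma qd_of_append_rep_false (hq : 1 ≤ q) (w : List Bool) (k : ℕ)
    (h : QDecreasing q (w ++ List.replicate k false)) : QDecreasing q w := by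
  induction k generalizing w with
  | zero => simpa using h
  | succ k ih =>
    rw [List.replicate_succ', ← List.append_assoc] at h
    exact ih _ (qd_drop_one_false _ h hq)

lemma qd_drop_true (w : List Bool) (h : QDecreasing q (w ++ [true])) :
    QDecreasing q w := by
  generalize hx : w ++ [true] = x at h
  induction h generalizing w with
  | ones m =>
    cases m with
    | zero => exfalso; simpa using congrArg List.length hx.symm
    | succ m =>
      rw [List.replicate_succ'] at hx
      have hw : w = List.replicate m true := List.append_cancel_right hx
      rw [hw]; exact QDecreasing.ones m
  | snoc u a b ha hb hu ih =>
    cases b with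
    | zero =>
      exfalso
      simp only [List.replicate_zero, List.append_nil] at hx
      have := congrArg List.getLast? hx
      cases a with
      | zero => omega
      | succ a =>
        rw [List.replicate_succ' (n := a)] at this
        simp [← List.append_assoc] at this
    | succ b =>
      rw [List.replicate_succ' (n := b), ← List.append_assoc] at hx
      have hw : w = u ++ List.replicate a false ++ List.replicate b true :=
        (List.append_cancel_right hx)
      rw [hw]
      exact QDecreasing.snoc u a b ha (by omega) hu

lemma qd_char (hq : 1 ≤ q) (w : List Bool) :
    QDecreasing q w ↔
      ta w = 0 ∨ (0 < ta w ∧ QDecreasing q (core w) ∧ tb w < q * ta w) := by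
  constructor
  · intro h
    cases h with
    | ones m => exact Or.inl (ta_rep_true m)
    | snoc u a b ha hb hu =>
      right
      have hu0 : u = dtf u ++ List.replicate (tf u) false := dtf_decomp u
      have hw : u ++ List.replicate a false ++ List.replicate b true
          = dtf u ++ List.replicate (tf u + a) false ++ List.replicate b true := by
        conv_lhs => rw [hu0]
        rw [List.replicate_add]
        simp [List.append_assoc]
      obtain ⟨h1, h2, h3⟩ := runs_compute (dtf u) (NEF_dtf u) (tf u + a) b (by omega)
      rw [hw, h1, h2, h3]
      refine ⟨by omega, ?_, ?_⟩
      · exact qd_of_append_rep_false hq _ _ (hu0 ▸ hu)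
      · have : q * a ≤ q * (tf u + a) := Nat.mul_le_mul_left q (by omega)
        omega
  · rintro (h | ⟨hpos, hcore, hb⟩)
    · obtain ⟨-, hw⟩ := eq_rep_of_ta_zero w h
      rw [hw]; exact QDecreasing.ones _
    · have := QDecreasing.snoc _ _ _ hpos hb hcore
      rwa [← decomp w] at this

lemma qd_append_true_char (hq : 1 ≤ q) (w : List Bool) :
    QDecreasing q (w ++ [true]) ↔
      ta w = 0 ∨ (0 < ta w ∧ QDecreasing q (core w) ∧ tb w + 1 < q * ta w) := by
  rw [qd_char hq, ta_append_true, core_append_true, tb_append_true]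

/-- saturated words: cannot be extended by a `1` -/
def Sat (q : ℕ) (w : List Bool) : Prop :=
  QDecreasing q w ∧ ¬ QDecreasing q (w ++ [true])

lemma sat_char (hq : 1 ≤ q) (w : List Bool) :
    Sat q w ↔ 0 < ta w ∧ QDecreasing q (core w) ∧ tb w + 1 = q * ta w := by
  rw [Sat, qd_char hq, qd_append_true_char hq]
  constructor
  · rintro ⟨h1 | ⟨hpos, hcore, hb⟩, h2⟩
    · exact absurd (Or.inl h1) h2
    · refine ⟨hpos, hcore, ?_⟩
      rcases Nat.lt_or_ge (tb w + 1) (q * ta w) with h | h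
      · exact absurd (Or.inr ⟨hpos, hcore, h⟩) h2
      · omega
  · rintro ⟨hpos, hcore, heq⟩
    refine ⟨Or.inr ⟨hpos, hcore, by omega⟩, ?_⟩
    rintro (h | ⟨-, -, hb⟩) <;> omega

lemma sat_len (hq : 1 ≤ q) (w : List Bool) (h : Sat q w) : q ≤ w.length := by
  rw [sat_char hq] at h
  obtain ⟨hpos, -, heq⟩ := h
  have := len_decomp w
  have : q * 1 ≤ q * ta w := Nat.mul_le_mul_left q hpos
  omega

/-! ### Counting helpers -/

lemma card_bij {α β : Type*} (P : α → Prop) (Q : β → Prop) (F : α → β) (G : β → α)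
    (hPQ : ∀ a, P a → Q (F a)) (hQP : ∀ b, Q b → P (G b))
    (hGF : ∀ a, P a → G (F a) = a) (hFG : ∀ b, Q b → F (G b) = b) :
    Nat.card {a // P a} = Nat.card {b // Q b} :=
  Nat.card_congr ⟨fun x => ⟨F x.1, hPQ _ x.2⟩, fun y => ⟨G y.1, hQP _ y.2⟩,
    fun x => Subtype.ext (hGF _ x.2), fun y => Subtype.ext (hFG _ y.2)⟩

lemma card_congr' {α : Type*} {P Q : α → Prop} (h : ∀ x, P x ↔ Q x) :
    Nat.card {x // P x} = Nat.card {x // Q x} :=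
  card_bij P Q id id (fun a ha => (h a).mp ha) (fun a ha => (h a).mpr ha)
    (fun _ _ => rfl) (fun _ _ => rfl)

lemma card_split {α : Type*} (P Q : α → Prop) [Finite {x // P x}] :
    Nat.card {x // P x} = Nat.card {x // P x ∧ Q x} + Nat.card {x // P x ∧ ¬ Q x} := by
  classical
  calc Nat.card {x // P x}
      = Nat.card ({y : {x // P x} // Q y.1} ⊕ {y : {x // P x} // ¬ Q y.1}) :=
        Nat.card_congr (Equiv.sumCompl fun y : {x // P x} => Q y.1).symm
    _ = Nat.card {y : {x // P x} // Q y.1} + Nat.card {y : {x // P x} // ¬ Q y.1} :=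
        Nat.card_sum
    _ = Nat.card {x // P x ∧ Q x} + Nat.card {x // P x ∧ ¬ Q x} := by
        rw [Nat.card_congr (Equiv.subtypeSubtypeEquivSubtypeInter P Q),
          Nat.card_congr (Equiv.subtypeSubtypeEquivSubtypeInter P (fun x => ¬ Q x))]

lemma fin_words (n : ℕ) (P : List Bool → Prop) :
    Finite {w : List Bool // w.length = n ∧ P w} := by
  have hs : {w : List Bool | w.length = n ∧ P w} ⊆ {w | w.length = n} := fun w hw => hw.1
  exact (Set.Finite.subset (List.finite_length_eq Bool n) hs).to_subtype

lemma fin_pairs (n : ℕ) (P : List Bool × ℕ → Prop)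
    (hP : ∀ p, P p → p.1.length = n ∧ p.1[p.2]? = some false) :
    Finite {p : List Bool × ℕ // P p} := by
  have hs : {p : List Bool × ℕ | P p} ⊆ ({l : List Bool | l.length = n} ×ˢ Set.Iio n) := by
    rintro ⟨w, i⟩ hp
    obtain ⟨h1, h2⟩ := hP _ hp
    have hi : i < w.length := by
      rcases List.getElem?_eq_some_iff.mp h2 with ⟨h, -⟩
      exact h
    exact ⟨h1, by simpa [h1] using hi⟩
  exact (Set.Finite.subset (Set.Finite.prod (List.finite_length_eq Bool n) (Set.finite_Iio n))
    hs).to_subtype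

lemma eq_dropLast (w : List Bool) (x : Bool) (h : w.getLast? = some x) :
    w = w.dropLast ++ [x] := by
  have hne : w ≠ [] := by rintro rfl; simp at h
  have := List.dropLast_append_getLast hne
  rw [List.getLast?_eq_getLast (l := w) hne] at h
  rw [← Option.some_inj.mp h]
  exact this.symm

/-! ### The counting functions -/

noncomputable def fcount (q n : ℕ) : ℕ :=
  Nat.card {w : List Bool // w.length = n ∧ QDecreasing q w}
noncomputable def ucount (q n : ℕ) : ℕ :=
  Nat.card {w : List Bool // w.length = n ∧ QDecreasing q w ∧ NEF w}
noncomputable def scount (q n : ℕ) : ℕ :=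
  Nat.card {w : List Bool // w.length = n ∧ Sat q w}
noncomputable def pcount (q n : ℕ) : ℕ :=
  Nat.card {p : List Bool × ℕ //
    p.1.length = n ∧ QDecreasing q p.1 ∧ p.1[p.2]? = some false}
noncomputable def vcount (q n : ℕ) : ℕ :=
  Nat.card {p : List Bool × ℕ //
    p.1.length = n ∧ (QDecreasing q p.1 ∧ NEF p.1) ∧ p.1[p.2]? = some false}
noncomputable def tcount (q n : ℕ) : ℕ :=
  Nat.card {p : List Bool × ℕ //
    p.1.length = n ∧ Sat q p.1 ∧ p.1[p.2]? = some false}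

lemma fcount_zero : fcount q 0 = 1 := by
  rw [fcount]
  haveI : Unique {w : List Bool // w.length = 0 ∧ QDecreasing q w} :=
    { default := ⟨[], rfl, qd_nil⟩
      uniq := fun w => Subtype.ext (List.length_eq_zero_iff.mp w.2.1) }
  exact Nat.card_unique

lemma ucount_zero : ucount q 0 = 1 := by
  rw [ucount]
  haveI : Unique {w : List Bool // w.length = 0 ∧ QDecreasing q w ∧ NEF w} :=
    { default := ⟨[], rfl, qd_nil, by simp [NEF]⟩
      uniq := fun w => Subtype.ext (List.length_eq_zero_iff.mp w.2.1) }
  exact Nat.card_unique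

lemma pcount_zero : pcount q 0 = 0 := by
  rw [pcount]
  haveI : IsEmpty {p : List Bool × ℕ //
      p.1.length = 0 ∧ QDecreasing q p.1 ∧ p.1[p.2]? = some false} := by
    constructor
    rintro ⟨⟨w, i⟩, h1, -, h3⟩
    rw [List.length_eq_zero_iff.mp h1] at h3
    simp at h3
  exact Nat.card_of_isEmpty

lemma vcount_zero : vcount q 0 = 0 := by
  rw [vcount]
  haveI : IsEmpty {p : List Bool × ℕ //
      p.1.length = 0 ∧ (QDecreasing q p.1 ∧ NEF p.1) ∧ p.1[p.2]? = some false} := by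
    constructor
    rintro ⟨⟨w, i⟩, h1, -, h3⟩
    rw [List.length_eq_zero_iff.mp h1] at h3
    simp at h3
  exact Nat.card_of_isEmpty

lemma scount_small (hq : 1 ≤ q) (m : ℕ) (hm : m < q) : scount q m = 0 := by
  rw [scount]
  haveI : IsEmpty {w : List Bool // w.length = m ∧ Sat q w} := by
    constructor
    rintro ⟨w, h1, h2⟩
    have := sat_len hq w h2
    omega
  exact Nat.card_of_isEmpty

lemma tcount_small (hq : 1 ≤ q) (m : ℕ) (hm : m < q) : tcount q m = 0 := by
  rw [tcount]
  haveI : IsEmpty {p : List Bool × ℕ // p.1.length = m ∧ Sat q p.1 ∧ p.1[p.2]? = some false} := by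
    constructor
    rintro ⟨⟨w, i⟩, h1, h2, -⟩
    have := sat_len hq _ h2
    omega
  exact Nat.card_of_isEmpty

/-! ### Basic recurrences -/

lemma getLast_true_of_NEF (a : List Bool) (n : ℕ) (hlen : a.length = n + 1) (hnef : NEF a) :
    a.getLast? = some true := by
  have hne : a ≠ [] := by intro h; rw [h] at hlen; simp at hlen
  rw [List.getLast?_eq_getLast (l := a) hne]
  cases hx : a.getLast hne with
  | false => exact absurd (by rw [List.getLast?_eq_getLast (l := a) hne, hx]) hnef
  | true => rfl

lemma rec_f (hq : 1 ≤ q) (n : ℕ) : fcount q (n+1) = ucount q (n+1) + fcount q n := by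
  haveI := fin_words (n+1) (QDecreasing q)
  rw [fcount, card_split (fun w => w.length = n+1 ∧ QDecreasing q w) (fun w => NEF w)]
  congr 1
  · rw [ucount]; exact card_congr' (fun w => by tauto)
  · rw [fcount]
    apply card_bij _ _ (fun w => w.dropLast) (fun w => w ++ [false])
    · rintro a ⟨⟨hlen, hqd⟩, hnef⟩
      have hl : a.getLast? = some false := not_not.mp hnef
      have ha := eq_dropLast a false hl
      rw [ha] at hqd
      exact ⟨by simp [List.length_dropLast, hlen], qd_drop_one_false _ hqd hq⟩
    · rintro b ⟨hlen, hqd⟩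
      refine ⟨⟨by simp [hlen], ?_⟩, by simp [NEF]⟩
      simpa using qd_append_rep_false hq b 1 hqd
    · rintro a ⟨⟨hlen, hqd⟩, hnef⟩
      exact (eq_dropLast a false (not_not.mp hnef)).symm
    · rintro b ⟨hlen, hqd⟩
      simp
  
lemma rec_u (hq : 1 ≤ q) (n : ℕ) : ucount q (n+1) + scount q n = fcount q n := by
  haveI := fin_words n (QDecreasing q)
  rw [fcount, card_split (fun w => w.length = n ∧ QDecreasing q w)
    (fun w => QDecreasing q (w ++ [true]))]
  congr 1
  · rw [ucount]
    apply card_bij _ _ (fun w => w.dropLast) (fun w => w ++ [true])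
    · rintro a ⟨hlen, hqd, hnef⟩
      have ha := eq_dropLast a true (getLast_true_of_NEF a n hlen hnef)
      rw [ha] at hqd
      exact ⟨⟨by rw [ha] at hlen; simpa using hlen, qd_drop_true _ hqd⟩, hqd⟩
    · rintro b ⟨⟨hlen, hqd⟩, hqdt⟩
      exact ⟨by simp [hlen], hqdt, by simp [NEF]⟩
    · rintro a ⟨hlen, hqd, hnef⟩
      exact (eq_dropLast a true (getLast_true_of_NEF a n hlen hnef)).symm
    · rintro b ⟨⟨hlen, hqd⟩, hqdt⟩
      simp
  · rw [scount]
    exact card_congr' (fun w => by rw [Sat]; tauto)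

lemma rec_p (hq : 1 ≤ q) (n : ℕ) :
    pcount q (n+1) = vcount q (n+1) + (pcount q n + fcount q n) := by
  haveI := fin_pairs (n+1)
    (fun p : List Bool × ℕ => p.1.length = n+1 ∧ QDecreasing q p.1 ∧ p.1[p.2]? = some false)
    (fun p hp => ⟨hp.1, hp.2.2⟩)
  rw [pcount, card_split
    (fun p : List Bool × ℕ => p.1.length = n+1 ∧ QDecreasing q p.1 ∧ p.1[p.2]? = some false)
    (fun p => NEF p.1)]
  congr 1
  · rw [vcount]; exact card_congr' (fun p => by tauto)
  · haveI := fin_pairs (n+1)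
      (fun p : List Bool × ℕ =>
        (p.1.length = n+1 ∧ QDecreasing q p.1 ∧ p.1[p.2]? = some false) ∧ ¬ NEF p.1)
      (fun p hp => ⟨hp.1.1, hp.1.2.2⟩)
    rw [card_split
      (fun p : List Bool × ℕ =>
        (p.1.length = n+1 ∧ QDecreasing q p.1 ∧ p.1[p.2]? = some false) ∧ ¬ NEF p.1)
      (fun p => p.2 < n)]
    congr 1
    · rw [pcount]
      apply card_bij _ _ (fun p => (p.1.dropLast, p.2)) (fun p => (p.1 ++ [false], p.2))
      · rintro ⟨w, i⟩ ⟨⟨⟨hlen, hqd, hmark⟩, hnef⟩, hi⟩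
        dsimp only at *
        have ha := eq_dropLast w false (not_not.mp hnef)
        have hdl : w.dropLast.length = n := by rw [ha] at hlen; simpa using hlen
        rw [ha] at hqd hmark
        refine ⟨hdl, qd_drop_one_false _ hqd hq, ?_⟩
        rwa [mark_left _ _ _ (by omega)] at hmark
      · rintro ⟨w, i⟩ ⟨hlen, hqd, hmark⟩
        dsimp only at *
        have hi : i < w.length := (List.getElem?_eq_some_iff.mp hmark).1
        refine ⟨⟨⟨by simp [hlen], by simpa using qd_append_rep_false hq w 1 hqd, ?_⟩,
          by simp [NEF]⟩, by omega⟩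
        rwa [mark_left _ _ _ hi]
      · rintro ⟨w, i⟩ ⟨⟨⟨hlen, hqd, hmark⟩, hnef⟩, hi⟩
        dsimp only at *
        have ha := eq_dropLast w false (not_not.mp hnef)
        exact Prod.ext ha.symm rfl
      · rintro ⟨w, i⟩ ⟨hlen, hqd, hmark⟩
        dsimp only at *
        simp
    · rw [fcount]
      apply card_bij _ _ (fun p => p.1.dropLast) (fun w => (w ++ [false], n))
      · rintro ⟨w, i⟩ ⟨⟨⟨hlen, hqd, hmark⟩, hnef⟩, hi⟩
        dsimp only at *
        have ha := eq_dropLast w false (not_not.mp hnef)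
        rw [ha] at hqd
        exact ⟨by rw [ha] at hlen; simpa using hlen, qd_drop_one_false _ hqd hq⟩
      · rintro w ⟨hlen, hqd⟩
        refine ⟨⟨⟨by simp [hlen], by simpa using qd_append_rep_false hq w 1 hqd, ?_⟩,
          by simp [NEF]⟩, by omega⟩
        rw [← hlen]
        exact List.getElem?_concat_length (l := w) (a := false)
      · rintro ⟨w, i⟩ ⟨⟨⟨hlen, hqd, hmark⟩, hnef⟩, hi⟩
        dsimp only at *
        have ha := eq_dropLast w false (not_not.mp hnef)
        have hiw : i < w.length := (List.getElem?_eq_some_iff.mp hmark).1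
        exact Prod.ext ha.symm (by dsimp only; omega)
      · rintro w ⟨hlen, hqd⟩
        simp

lemma rec_v (hq : 1 ≤ q) (n : ℕ) : vcount q (n+1) + tcount q n = pcount q n := by
  haveI := fin_pairs n
    (fun p : List Bool × ℕ => p.1.length = n ∧ QDecreasing q p.1 ∧ p.1[p.2]? = some false)
    (fun p hp => ⟨hp.1, hp.2.2⟩)
  rw [pcount, card_split
    (fun p : List Bool × ℕ => p.1.length = n ∧ QDecreasing q p.1 ∧ p.1[p.2]? = some false)
    (fun p => QDecreasing q (p.1 ++ [true]))]
  congr 1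
  · rw [vcount]
    apply card_bij _ _ (fun p => (p.1.dropLast, p.2)) (fun p => (p.1 ++ [true], p.2))
    · rintro ⟨w, i⟩ ⟨hlen, ⟨hqd, hnef⟩, hmark⟩
      dsimp only at *
      have ha := eq_dropLast w true (getLast_true_of_NEF w n hlen hnef)
      have hdl : w.dropLast.length = n := by rw [ha] at hlen; simpa using hlen
      have hiw : i < w.length := (List.getElem?_eq_some_iff.mp hmark).1
      have hin : i ≠ n := by
        intro h
        rw [ha, h, ← hdl] at hmark
        rw [List.getElem?_concat_length] at hmark
        simp at hmark
      rw [ha] at hqd hmark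
      refine ⟨⟨hdl, qd_drop_true _ hqd, ?_⟩, hqd⟩
      rwa [mark_left _ _ _ (by omega)] at hmark
    · rintro ⟨w, i⟩ ⟨⟨hlen, hqd, hmark⟩, hqdt⟩
      dsimp only at *
      have hiw : i < w.length := (List.getElem?_eq_some_iff.mp hmark).1
      refine ⟨by simp [hlen], ⟨hqdt, by simp [NEF]⟩, ?_⟩
      rwa [mark_left _ _ _ hiw]
    · rintro ⟨w, i⟩ ⟨hlen, ⟨hqd, hnef⟩, hmark⟩
      dsimp only at *
      have ha := eq_dropLast w true (getLast_true_of_NEF w n hlen hnef)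
      exact Prod.ext ha.symm rfl
    · rintro ⟨w, i⟩ ⟨⟨hlen, hqd, hmark⟩, hqdt⟩
      dsimp only at *
      simp
  · rw [tcount]
    exact card_congr' (fun p => by rw [Sat]; tauto)

/-! ### The saturated-word bijections -/

def shrinkw (q : ℕ) (w : List Bool) : List Bool :=
  core w ++ List.replicate (ta w - 1) false ++ List.replicate (tb w - q) true

def groww (q : ℕ) (w : List Bool) : List Bool :=
  core w ++ List.replicate (ta w + 1) false ++ List.replicate (tb w + q) true

lemma len_app (u : List Bool) (a b : ℕ) :
    (u ++ List.replicate a false ++ List.replicate b true).length = u.length + a + b := by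
  simp [List.length_append]
  omega

lemma mul_sub_one' (q t : ℕ) : q * (t - 1) = q * t - q := by
  cases t with
  | zero => simp
  | succ t => rw [Nat.succ_sub_one, Nat.mul_succ]; omega

lemma grow_props (hq : 1 ≤ q) (v : List Bool) (hsat : Sat q v) :
    Sat q (groww q v) ∧ ta (groww q v) = ta v + 1 ∧
      (groww q v).length = v.length + (q+1) ∧ shrinkw q (groww q v) = v := by
  obtain ⟨hpos, hcore, htb⟩ := (sat_char hq v).mp hsat
  obtain ⟨s1, s2, s3⟩ := runs_compute (core v) (NEF_core v) (ta v + 1) (tb v + q) (by omega)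
  rw [groww] at *
  refine ⟨?_, s2, ?_, ?_⟩
  · rw [sat_char hq, s1, s2, s3]
    exact ⟨by omega, hcore, by rw [Nat.mul_succ]; omega⟩
  · rw [len_app, len_decomp v]; omega
  · rw [shrinkw, s1, s2, s3]
    have e1 : ta v + 1 - 1 = ta v := by omega
    have e2 : tb v + q - q = tb v := by omega
    rw [e1, e2]
    exact (decomp v).symm

lemma shrink_props (hq : 1 ≤ q) (w : List Bool) (hsat : Sat q w) (hta : ta w ≠ 1) :
    Sat q (shrinkw q w) ∧ (shrinkw q w).length + (q+1) = w.length ∧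
      groww q (shrinkw q w) = w := by
  obtain ⟨hpos, hcore, htb⟩ := (sat_char hq w).mp hsat
  have h2 : 2 ≤ ta w := by omega
  have h2q : 2*q ≤ q * ta w := by
    calc 2*q = q*2 := by ring
    _ ≤ q * ta w := Nat.mul_le_mul_left q h2
  have htbq : q ≤ tb w := by omega
  obtain ⟨s1, s2, s3⟩ := runs_compute (core w) (NEF_core w) (ta w - 1) (tb w - q) (by omega)
  rw [shrinkw] at *
  refine ⟨?_, ?_, ?_⟩
  · rw [sat_char hq, s1, s2, s3]
    refine ⟨by omega, hcore, ?_⟩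
    rw [mul_sub_one']
    omega
  · rw [len_app, len_decomp w]; omega
  · rw [groww, s1, s2, s3]
    have e1 : ta w - 1 + 1 = ta w := by omega
    have e2 : tb w - q + q = tb w := by omega
    rw [e1, e2]
    exact (decomp w).symm

lemma mark_iff (u : List Bool) (a b i : ℕ) :
    (u ++ List.replicate a false ++ List.replicate b true)[i]? = some false ↔
      ((i < u.length ∧ u[i]? = some false) ∨ (u.length ≤ i ∧ i < u.length + a)) := by
  constructor
  · intro h
    have hb := mark_bound u a b i h
    rcases Nat.lt_or_ge i u.length with hi | hi
    · left
      rw [List.append_assoc] at h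
      exact ⟨hi, by rwa [mark_left _ _ _ hi] at h⟩
    · right; exact ⟨hi, hb⟩
  · rintro (⟨hi, hm⟩ | ⟨h1, h2⟩)
    · rw [List.append_assoc, mark_left _ _ _ hi]; exact hm
    · exact mark_false_pos u a b i h1 h2

lemma satA (hq : 1 ≤ q) (m : ℕ) :
    Nat.card {w : List Bool // (w.length = q+m ∧ Sat q w) ∧ ta w = 1} = ucount q m := by
  rw [ucount]
  apply card_bij _ _ (fun w => core w)
    (fun v => v ++ List.replicate 1 false ++ List.replicate (q-1) true)
  · rintro w ⟨⟨hlen, hsat⟩, hta⟩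
    obtain ⟨hpos, hcore, htb⟩ := (sat_char hq w).mp hsat
    rw [hta] at htb
    have := len_decomp w
    exact ⟨by omega, hcore, NEF_core w⟩
  · rintro v ⟨hlen, hqd, hnef⟩
    obtain ⟨s1, s2, s3⟩ := runs_compute v hnef 1 (q-1) (by omega)
    refine ⟨⟨?_, ?_⟩, s2⟩
    · rw [len_app]; omega
    · rw [sat_char hq, s1, s2, s3]
      exact ⟨by omega, hqd, by omega⟩
  · rintro w ⟨⟨hlen, hsat⟩, hta⟩
    obtain ⟨hpos, hcore, htb⟩ := (sat_char hq w).mp hsat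
    rw [hta] at htb
    have htb' : tb w = q - 1 := by omega
    have := decomp w
    rw [hta, htb'] at this
    exact this.symm
  · rintro v ⟨hlen, hqd, hnef⟩
    exact (runs_compute v hnef 1 (q-1) (by omega)).2.2

lemma satB0 (hq : 1 ≤ q) :
    Nat.card {w : List Bool // (w.length = q ∧ Sat q w) ∧ ¬ ta w = 1} = 0 := by
  haveI : IsEmpty {w : List Bool // (w.length = q ∧ Sat q w) ∧ ¬ ta w = 1} := by
    constructor
    rintro ⟨w, ⟨hlen, hsat⟩, hta⟩
    obtain ⟨hpos, hcore, htb⟩ := (sat_char hq w).mp hsat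
    have h2q : 2*q ≤ q * ta w := by
      calc 2*q = q*2 := by ring
      _ ≤ q * ta w := Nat.mul_le_mul_left q (by omega)
    have := len_decomp w
    omega
  exact Nat.card_of_isEmpty

lemma satB (hq : 1 ≤ q) (n : ℕ) :
    Nat.card {w : List Bool // (w.length = q+(n+1) ∧ Sat q w) ∧ ¬ ta w = 1}
      = scount q n := by
  rw [scount]
  apply card_bij _ _ (fun w => shrinkw q w) (fun v => groww q v)
  · rintro w ⟨⟨hlen, hsat⟩, hta⟩
    obtain ⟨p1, p2, p3⟩ := shrink_props hq w hsat hta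
    exact ⟨by omega, p1⟩
  · rintro v ⟨hlen, hsat⟩
    obtain ⟨p1, p2, p3, p4⟩ := grow_props hq v hsat
    obtain ⟨hpos, -, -⟩ := (sat_char hq v).mp hsat
    exact ⟨⟨by omega, p1⟩, by omega⟩
  · rintro w ⟨⟨hlen, hsat⟩, hta⟩
    exact (shrink_props hq w hsat hta).2.2
  · rintro v ⟨hlen, hsat⟩
    exact (grow_props hq v hsat).2.2.2

lemma rec_s (hq : 1 ≤ q) (n : ℕ) :
    scount q (q+(n+1)) = ucount q (n+1) + scount q n := by
  haveI := fin_words (q+(n+1)) (Sat q)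
  rw [scount, card_split (fun w => w.length = q+(n+1) ∧ Sat q w) (fun w => ta w = 1),
    satA hq, satB hq]

lemma rec_s0 (hq : 1 ≤ q) : scount q q = ucount q 0 := by
  haveI := fin_words q (Sat q)
  have h1 := satA hq 0
  simp only [Nat.add_zero] at h1
  rw [scount, card_split (fun w => w.length = q ∧ Sat q w) (fun w => ta w = 1),
    h1, satB0 hq]
  omega

lemma mark_decomp_iff (w : List Bool) (i : ℕ) :
    w[i]? = some false ↔
      ((i < (core w).length ∧ (core w)[i]? = some false) ∨
        ((core w).length ≤ i ∧ i < (core w).length + ta w)) := by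
  conv_lhs => rw [decomp w]
  exact mark_iff _ _ _ i

lemma tsatA (hq : 1 ≤ q) (m : ℕ) :
    Nat.card {p : List Bool × ℕ //
        (p.1.length = q+m ∧ Sat q p.1 ∧ p.1[p.2]? = some false) ∧ ta p.1 = 1}
      = vcount q m + ucount q m := by
  haveI := fin_pairs (q+m)
    (fun p : List Bool × ℕ =>
      (p.1.length = q+m ∧ Sat q p.1 ∧ p.1[p.2]? = some false) ∧ ta p.1 = 1)
    (fun p hp => ⟨hp.1.1, hp.1.2.2⟩)
  rw [card_split
    (fun p : List Bool × ℕ =>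
      (p.1.length = q+m ∧ Sat q p.1 ∧ p.1[p.2]? = some false) ∧ ta p.1 = 1)
    (fun p => p.2 < m)]
  congr 1
  · rw [vcount]
    apply card_bij _ _ (fun p => (core p.1, p.2))
      (fun p => (p.1 ++ List.replicate 1 false ++ List.replicate (q-1) true, p.2))
    · rintro ⟨w, i⟩ ⟨⟨⟨hlen, hsat, hmark⟩, hta⟩, hi⟩
      dsimp only at *
      obtain ⟨hpos, hcore, htb⟩ := (sat_char hq w).mp hsat
      rw [hta] at htb
      have hld := len_decomp w
      have hclen : (core w).length = m := by omega
      rw [mark_decomp_iff] at hmark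
      rcases hmark with ⟨h1, h2⟩ | ⟨h1, h2⟩
      · exact ⟨hclen, ⟨hcore, NEF_core w⟩, h2⟩
      · omega
    · rintro ⟨v, i⟩ ⟨hlen, ⟨hqd, hnef⟩, hmark⟩
      dsimp only at *
      obtain ⟨s1, s2, s3⟩ := runs_compute v hnef 1 (q-1) (by omega)
      have hiv : i < v.length := (List.getElem?_eq_some_iff.mp hmark).1
      refine ⟨⟨⟨by rw [len_app]; omega, ?_, ?_⟩, s2⟩, by omega⟩
      · rw [sat_char hq, s1, s2, s3]
        exact ⟨by omega, hqd, by omega⟩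
      · rw [List.append_assoc, mark_left _ _ _ hiv]
        exact hmark
    · rintro ⟨w, i⟩ ⟨⟨⟨hlen, hsat, hmark⟩, hta⟩, hi⟩
      dsimp only at *
      obtain ⟨hpos, hcore, htb⟩ := (sat_char hq w).mp hsat
      rw [hta] at htb
      have htb' : tb w = q - 1 := by omega
      have hd := decomp w
      rw [hta, htb'] at hd
      exact Prod.ext hd.symm rfl
    · rintro ⟨v, i⟩ ⟨hlen, ⟨hqd, hnef⟩, hmark⟩
      dsimp only at *
      exact Prod.ext (runs_compute v hnef 1 (q-1) (by omega)).2.2 rfl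
  · rw [ucount]
    apply card_bij _ _ (fun p => core p.1)
      (fun v => (v ++ List.replicate 1 false ++ List.replicate (q-1) true, m))
    · rintro ⟨w, i⟩ ⟨⟨⟨hlen, hsat, hmark⟩, hta⟩, hi⟩
      dsimp only at *
      obtain ⟨hpos, hcore, htb⟩ := (sat_char hq w).mp hsat
      rw [hta] at htb
      have hld := len_decomp w
      exact ⟨by omega, hcore, NEF_core w⟩
    · rintro v ⟨hlen, hqd, hnef⟩
      obtain ⟨s1, s2, s3⟩ := runs_compute v hnef 1 (q-1) (by omega)
      refine ⟨⟨⟨by dsimp only; rw [len_app]; omega, ?_, ?_⟩, s2⟩, by omega⟩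
      · rw [sat_char hq, s1, s2, s3]
        exact ⟨by omega, hqd, by omega⟩
      · dsimp only
        exact mark_false_pos v 1 (q-1) m (by omega) (by omega)
    · rintro ⟨w, i⟩ ⟨⟨⟨hlen, hsat, hmark⟩, hta⟩, hi⟩
      dsimp only at *
      obtain ⟨hpos, hcore, htb⟩ := (sat_char hq w).mp hsat
      rw [hta] at htb
      have htb' : tb w = q - 1 := by omega
      have hld := len_decomp w
      have hd := decomp w
      rw [hta, htb'] at hd
      rw [mark_decomp_iff] at hmark
      have him : i = m := by
        rcases hmark with ⟨h1, h2⟩ | ⟨h1, h2⟩ <;> omega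
      exact Prod.ext hd.symm (by dsimp only; omega)
    · rintro v ⟨hlen, hqd, hnef⟩
      exact (runs_compute v hnef 1 (q-1) (by omega)).2.2

lemma groww_def (q : ℕ) (w : List Bool) :
    groww q w = core w ++ List.replicate (ta w + 1) false ++ List.replicate (tb w + q) true := rfl

lemma shrinkw_def (q : ℕ) (w : List Bool) :
    shrinkw q w = core w ++ List.replicate (ta w - 1) false ++ List.replicate (tb w - q) true := rfl

lemma tsatB (hq : 1 ≤ q) (n : ℕ) :
    Nat.card {p : List Bool × ℕ //
        (p.1.length = q+(n+1) ∧ Sat q p.1 ∧ p.1[p.2]? = some false) ∧ ¬ ta p.1 = 1}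
      = tcount q n + scount q n := by
  haveI := fin_pairs (q+(n+1))
    (fun p : List Bool × ℕ =>
      (p.1.length = q+(n+1) ∧ Sat q p.1 ∧ p.1[p.2]? = some false) ∧ ¬ ta p.1 = 1)
    (fun p hp => ⟨hp.1.1, hp.1.2.2⟩)
  rw [card_split
    (fun p : List Bool × ℕ =>
      (p.1.length = q+(n+1) ∧ Sat q p.1 ∧ p.1[p.2]? = some false) ∧ ¬ ta p.1 = 1)
    (fun p => p.2 < (core p.1).length + (ta p.1 - 1))]
  congr 1
  · rw [tcount]
    apply card_bij _ _ (fun p => (shrinkw q p.1, p.2)) (fun p => (groww q p.1, p.2))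
    · rintro ⟨w, i⟩ ⟨⟨⟨hlen, hsat, hmark⟩, hta⟩, hi⟩
      dsimp only at *
      obtain ⟨p1, p2, p3⟩ := shrink_props hq w hsat hta
      refine ⟨by omega, p1, ?_⟩
      rw [shrinkw_def, mark_iff]
      rw [mark_decomp_iff] at hmark
      rcases hmark with ⟨h1, h2⟩ | ⟨h1, h2⟩
      · exact Or.inl ⟨h1, h2⟩
      · exact Or.inr ⟨h1, by omega⟩
    · rintro ⟨v, i⟩ ⟨hlen, hsat, hmark⟩
      dsimp only at *
      obtain ⟨p1, p2, p3, p4⟩ := grow_props hq v hsat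
      obtain ⟨hpos, hcore, htb⟩ := (sat_char hq v).mp hsat
      obtain ⟨s1, s2, s3⟩ :=
        runs_compute (core v) (NEF_core v) (ta v + 1) (tb v + q) (by omega)
      rw [mark_decomp_iff] at hmark
      refine ⟨⟨⟨by omega, p1, ?_⟩, by rw [← groww_def q v] at s2; omega⟩, ?_⟩
      · rw [groww_def, mark_iff]
        rcases hmark with ⟨h1, h2⟩ | ⟨h1, h2⟩
        · exact Or.inl ⟨h1, h2⟩
        · exact Or.inr ⟨h1, by omega⟩
      · rw [← groww_def q v] at s2 s3
        rw [s3, s2]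
        rcases hmark with ⟨h1, h2⟩ | ⟨h1, h2⟩ <;> omega
    · rintro ⟨w, i⟩ ⟨⟨⟨hlen, hsat, hmark⟩, hta⟩, hi⟩
      dsimp only at *
      exact Prod.ext (shrink_props hq w hsat hta).2.2 rfl
    · rintro ⟨v, i⟩ ⟨hlen, hsat, hmark⟩
      dsimp only at *
      exact Prod.ext (grow_props hq v hsat).2.2.2 rfl
  · rw [scount]
    apply card_bij _ _ (fun p => shrinkw q p.1)
      (fun v => (groww q v, (core v).length + ta v))
    · rintro ⟨w, i⟩ ⟨⟨⟨hlen, hsat, hmark⟩, hta⟩, hi⟩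
      dsimp only at *
      obtain ⟨p1, p2, p3⟩ := shrink_props hq w hsat hta
      exact ⟨by omega, p1⟩
    · rintro v ⟨hlen, hsat⟩
      dsimp only at *
      obtain ⟨p1, p2, p3, p4⟩ := grow_props hq v hsat
      obtain ⟨hpos, hcore, htb⟩ := (sat_char hq v).mp hsat
      obtain ⟨s1, s2, s3⟩ :=
        runs_compute (core v) (NEF_core v) (ta v + 1) (tb v + q) (by omega)
      rw [← groww_def q v] at s1 s2 s3
      refine ⟨⟨⟨by omega, p1, ?_⟩, by omega⟩, by rw [s3, s2]; omega⟩
      · rw [groww_def, mark_iff]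
        exact Or.inr ⟨by omega, by omega⟩
    · rintro ⟨w, i⟩ ⟨⟨⟨hlen, hsat, hmark⟩, hta⟩, hi⟩
      dsimp only at *
      obtain ⟨hpos, hcore, htb⟩ := (sat_char hq w).mp hsat
      obtain ⟨s1, s2, s3⟩ :=
        runs_compute (core w) (NEF_core w) (ta w - 1) (tb w - q) (by omega)
      have hsh := (shrink_props hq w hsat hta).2.2
      rw [← shrinkw_def q w] at s2 s3
      rw [mark_decomp_iff] at hmark
      refine Prod.ext hsh ?_
      dsimp only
      rw [s3, s2]
      rcases hmark with ⟨h1, h2⟩ | ⟨h1, h2⟩ <;> omega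
    · rintro v ⟨hlen, hsat⟩
      exact (grow_props hq v hsat).2.2.2

lemma tsatB0 (hq : 1 ≤ q) :
    Nat.card {p : List Bool × ℕ //
        (p.1.length = q ∧ Sat q p.1 ∧ p.1[p.2]? = some false) ∧ ¬ ta p.1 = 1} = 0 := by
  haveI : IsEmpty {p : List Bool × ℕ //
      (p.1.length = q ∧ Sat q p.1 ∧ p.1[p.2]? = some false) ∧ ¬ ta p.1 = 1} := by
    constructor
    rintro ⟨⟨w, i⟩, ⟨hlen, hsat, hmark⟩, hta⟩
    dsimp only at *
    obtain ⟨hpos, hcore, htb⟩ := (sat_char hq w).mp hsat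
    have h2q : 2*q ≤ q * ta w := by
      calc 2*q = q*2 := by ring
      _ ≤ q * ta w := Nat.mul_le_mul_left q (by omega)
    have := len_decomp w
    omega
  exact Nat.card_of_isEmpty

lemma rec_t (hq : 1 ≤ q) (n : ℕ) :
    tcount q (q+(n+1)) = (vcount q (n+1) + ucount q (n+1)) + (tcount q n + scount q n) := by
  haveI := fin_pairs (q+(n+1))
    (fun p : List Bool × ℕ => p.1.length = q+(n+1) ∧ Sat q p.1 ∧ p.1[p.2]? = some false)
    (fun p hp => ⟨hp.1, hp.2.2⟩)
  rw [tcount, card_split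
    (fun p : List Bool × ℕ => p.1.length = q+(n+1) ∧ Sat q p.1 ∧ p.1[p.2]? = some false)
    (fun p => ta p.1 = 1), tsatA hq, tsatB hq]

lemma rec_t0 (hq : 1 ≤ q) : tcount q q = vcount q 0 + ucount q 0 := by
  haveI := fin_pairs q
    (fun p : List Bool × ℕ => p.1.length = q ∧ Sat q p.1 ∧ p.1[p.2]? = some false)
    (fun p hp => ⟨hp.1, hp.2.2⟩)
  have h1 := tsatA hq 0
  simp only [Nat.add_zero] at h1
  rw [tcount, card_split
    (fun p : List Bool × ℕ => p.1.length = q ∧ Sat q p.1 ∧ p.1[p.2]? = some false)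
    (fun p => ta p.1 = 1), h1, tsatB0 hq]
  omega

/-! ### Power series -/

open PowerSeries

noncomputable def Fs (q : ℕ) : PowerSeries ℤ := PowerSeries.mk fun n => (fcount q n : ℤ)
noncomputable def Us (q : ℕ) : PowerSeries ℤ := PowerSeries.mk fun n => (ucount q n : ℤ)
noncomputable def Ss (q : ℕ) : PowerSeries ℤ := PowerSeries.mk fun n => (scount q n : ℤ)
noncomputable def Ps (q : ℕ) : PowerSeries ℤ := PowerSeries.mk fun n => (pcount q n : ℤ)
noncomputable def Vs (q : ℕ) : PowerSeries ℤ := PowerSeries.mk fun n => (vcount q n : ℤ)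
noncomputable def Ts (q : ℕ) : PowerSeries ℤ := PowerSeries.mk fun n => (tcount q n : ℤ)

lemma PS1 (hq : 1 ≤ q) : Fs q = Us q + Fs q * X^1 := by
  ext n
  simp only [map_add, Fs, Us, coeff_mk, coeff_mul_X_pow']
  cases n with
  | zero => simp [fcount_zero, ucount_zero]
  | succ n =>
    rw [if_pos (by omega)]
    have e : n + 1 - 1 = n := by omega
    rw [e]
    exact_mod_cast rec_f hq n

lemma PS2 (hq : 1 ≤ q) : Us q + Ss q * X^1 = 1 + Fs q * X^1 := by
  ext n
  simp only [map_add, Fs, Us, Ss, coeff_mk, coeff_mul_X_pow', coeff_one]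
  cases n with
  | zero => simp [ucount_zero]
  | succ n =>
    rw [if_pos (by omega), if_neg (by omega)]
    have e : n + 1 - 1 = n := by omega
    rw [e]
    push_cast
    have := rec_u hq n
    push_cast at this ⊢
    linarith [this]

lemma PS3 (hq : 1 ≤ q) : Ss q = Ss q * X^(q+1) + Us q * X^q := by
  ext n
  simp only [map_add, Ss, Us, coeff_mk, coeff_mul_X_pow']
  rcases Nat.lt_or_ge n q with hn | hn
  · rw [if_neg (by omega), if_neg (by omega), scount_small hq n hn]
    simp
  · rcases Nat.eq_or_lt_of_le hn with hn' | hn'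
    · subst hn'
      rw [if_neg (by omega), if_pos (by omega)]
      have e : q - q = 0 := by omega
      rw [e]
      simp only [zero_add]
      exact_mod_cast rec_s0 hq
    · obtain ⟨k, rfl⟩ : ∃ k, n = q + (k+1) := ⟨n - q - 1, by omega⟩
      rw [if_pos (by omega), if_pos (by omega)]
      have e1 : q + (k+1) - (q+1) = k := by omega
      have e2 : q + (k+1) - q = k+1 := by omega
      rw [e1, e2]
      have := rec_s hq k
      push_cast
      push_cast at this
      linarith [this]

lemma PS4 (hq : 1 ≤ q) : Ps q = Vs q + Ps q * X^1 + Fs q * X^1 := by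
  ext n
  simp only [map_add, Ps, Vs, Fs, coeff_mk, coeff_mul_X_pow']
  cases n with
  | zero => simp [pcount_zero, vcount_zero]
  | succ n =>
    rw [if_pos (by omega)]
    have e : n + 1 - 1 = n := by omega
    rw [e]
    have := rec_p hq n
    push_cast
    push_cast at this
    linarith [this]

lemma PS5 (hq : 1 ≤ q) : Vs q + Ts q * X^1 = Ps q * X^1 := by
  ext n
  simp only [map_add, Ps, Vs, Ts, coeff_mk, coeff_mul_X_pow']
  cases n with
  | zero => simp [vcount_zero]
  | succ n =>
    rw [if_pos (by omega)]
    have e : n + 1 - 1 = n := by omega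
    rw [e]
    have := rec_v hq n
    push_cast
    push_cast at this
    linarith [this]

lemma PS6 (hq : 1 ≤ q) : Ts q = (Ts q + Ss q) * X^(q+1) + (Vs q + Us q) * X^q := by
  ext n
  simp only [map_add, Ts, Ss, Vs, Us, coeff_mk, coeff_mul_X_pow', map_mul]
  rcases Nat.lt_or_ge n q with hn | hn
  · rw [if_neg (by omega), if_neg (by omega), tcount_small hq n hn]
    simp
  · rcases Nat.eq_or_lt_of_le hn with hn' | hn'
    · subst hn'
      rw [if_neg (by omega), if_pos (by omega)]
      have e : q - q = 0 := by omega
      rw [e]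
      have := rec_t0 hq
      push_cast
      push_cast at this
      linarith [this]
    · obtain ⟨k, rfl⟩ : ∃ k, n = q + (k+1) := ⟨n - q - 1, by omega⟩
      rw [if_pos (by omega), if_pos (by omega)]
      have e1 : q + (k+1) - (q+1) = k := by omega
      have e2 : q + (k+1) - q = k+1 := by omega
      rw [e1, e2]
      have := rec_t hq k
      push_cast
      push_cast at this
      linarith [this]


theorem qdecreasing_popularity_zero_gf (q : ℕ) (hq : 1 ≤ q) :
    PowerSeries.mk (fun n => (qdecPopularity q false n : ℤ)) *
      (1 - 2 * PowerSeries.X + PowerSeries.X ^ (q + 2)) ^ 2 =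
    PowerSeries.X * (1 - PowerSeries.X ^ q) := by
  have hP : PowerSeries.mk (fun n => (qdecPopularity q false n : ℤ)) = Ps q := rfl
  rw [hP]
  have h1 := PS1 (q := q) hq
  have h2 := PS2 (q := q) hq
  have h3 := PS3 (q := q) hq
  have h4 := PS4 (q := q) hq
  have h5 := PS5 (q := q) hq
  have h6 := PS6 (q := q) hq
  have hW0 : (1 - X^(q+1) : PowerSeries ℤ) ≠ 0 := by
    intro h
    have hc := congrArg (constantCoeff (R := ℤ)) h
    rw [map_sub, map_one, map_pow, constantCoeff_X, zero_pow (by omega : q+1 ≠ 0),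
      map_zero] at hc
    norm_num at hc
  have e1 : Fs q * (1 - 2*X) + X * Ss q = 1 := by linear_combination h1 + h2
  have hSW : Ss q * (1 - X^(q+1)) = X^q * (1-X) * Fs q := by
    linear_combination h3 - X^q * h1
  have hFD : Fs q * (1 - 2*X + X^(q+2)) = 1 - X^(q+1) := by
    linear_combination (1 - X^(q+1)) * e1 - X * hSW
  have hSD' : (1 - X^(q+1)) * (Ss q * (1 - 2*X + X^(q+2)))
      = (1 - X^(q+1)) * (X^q*(1-X)) := by
    linear_combination (1-2*X+X^(q+2)) * hSW + (X^q*(1-X)) * hFD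
  have hSD := mul_left_cancel₀ hW0 hSD'
  have hPR : Ps q * (1 - 2*X) = X * Fs q - X * Ts q := by linear_combination h4 + h5
  have hTW : Ts q * (1 - X^(q+1))
      = X^(q+1) * Ss q + X^q*(1-X)*Ps q + X^q*(1-2*X)*Fs q := by
    linear_combination h6 - X^q * h4 - X^q * h1
  have hE : Ps q * (1-2*X+X^(q+2))
      = X*Fs q*(1 - X^(q+1)) - X^(q+2)*Ss q - X^(q+1)*(1-2*X)*Fs q := by
    linear_combination (1 - X^(q+1)) * hPR - X * hTW
  linear_combination (1-2*X+X^(q+2)) * hE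
    + (X*(1 - X^(q+1)) - X^(q+1)*(1-2*X)) * hFD - X^(q+2) * hSD

end Aux
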